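/- No linear positive map Q : L(H_O^{⊗k}) → L(H_B ⊗ H_E) (for any finite k ≥ 1) can simultaneously satisfy: (i) Q(|ψ₀⟩⟨ψ₀|^{⊗k}) = p₀ · |ψ₀⟩⟨ψ₀| ⊗ |φ₀⟩⟨φ₀| with p₀ > 0, for some fixed pure states ψ₀ on H_O and φ₀ on H_E; and (ii) Q((q|ψ₀⟩⟨ψ₀| + (1-q)|ψ₁⟩⟨ψ₁|)^{⊗k}) = p₀₁ · |φ₀₁⟩⟨φ₀₁| with p₀₁ > 0 and Tr_E |φ₀₁⟩⟨φ₀₁| = q|ψ₀⟩⟨ψ₀| + (1-q)|ψ₁⟩⟨ψ₁|, where ψ₁ ≠ ψ₀ is a pure state on H_O, q ∈ (0,1), H_B ≅ H_O, and |φ₀₁⟩ ∈ H_B ⊗ H_E is a unit vector. -/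

import Mathlib

open scoped BigOperators ComplexOrder Kronecker

/-- The outer product `|v⟩⟨v|` as a matrix. -/
noncomputable def outerMat {n : Type*} (v : n → ℂ) : Matrix n n ℂ :=
  Matrix.vecMulVec v (star v)

/-- Partial trace over the second tensor factor. -/
noncomputable def ptrace2 {α β : Type*} [Fintype β] (M : Matrix (α × β) (α × β) ℂ) :
    Matrix α α ℂ :=
  Matrix.of fun i j => ∑ e : β, M (i, e) (j, e)

/-- The `k`-fold tensor power of a matrix on `O`, as a matrix on `Fin k → O`. -/
noncomputable def tensorPow {O : Type*} (k : ℕ) (M : Matrix O O ℂ) :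
    Matrix (Fin k → O) (Fin k → O) ℂ :=
  Matrix.of fun f g => ∏ i : Fin k, M (f i) (g i)

theorem quadform_outer {n : Type*} [Fintype n] (v x : n → ℂ) :
    dotProduct (star x) ((outerMat v).mulVec x) =
      (starRingEnd ℂ) (dotProduct (star v) x) * dotProduct (star v) x := by
  simp only [outerMat, dotProduct, Matrix.mulVec, Matrix.vecMulVec_apply,
    Pi.star_apply, map_sum, map_mul, Finset.mul_sum, Finset.sum_mul]
  rw [Finset.sum_comm]
  refine Finset.sum_congr rfl fun i _ => Finset.sum_congr rfl fun j _ => ?_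
  simp only [starRingEnd_apply, star_star]
  ring

theorem outer_hermitian {n : Type*} (v : n → ℂ) : (outerMat v).IsHermitian := by
  ext i j
  simp only [outerMat, Matrix.conjTranspose_apply, Matrix.vecMulVec_apply, Pi.star_apply,
    star_mul', star_star]
  exact mul_comm _ _

theorem conj_mul_self (z : ℂ) : (starRingEnd ℂ) z * z = ((Complex.normSq z : ℝ) : ℂ) := by
  rw [mul_comm, Complex.mul_conj]

theorem star_mul_self' (z : ℂ) : star z * z = ((‖z‖ ^ 2 : ℝ) : ℂ) := by
  rw [show star z = (starRingEnd ℂ) z from rfl, conj_mul_self, Complex.normSq_eq_norm_sq]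

theorem sum_mulVec' {n ι : Type*} [Fintype n] (s : Finset ι) (A : ι → Matrix n n ℂ)
    (x : n → ℂ) : (∑ i ∈ s, A i).mulVec x = ∑ i ∈ s, (A i).mulVec x := by
  funext j
  simp only [Matrix.mulVec, dotProduct, Finset.sum_apply, Matrix.sum_apply,
    Finset.sum_mul]
  exact Finset.sum_comm

theorem dotProduct_sum' {n ι : Type*} [Fintype n] (s : Finset ι) (u : n → ℂ)
    (v : ι → n → ℂ) : dotProduct u (∑ i ∈ s, v i) = ∑ i ∈ s, dotProduct u (v i) := by
  simp only [dotProduct, Finset.sum_apply, Finset.mul_sum]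
  exact Finset.sum_comm

theorem posSemidef_sum_outer {n ι : Type*} [Fintype n] (s : Finset ι)
    (c : ι → ℝ) (hc : ∀ i ∈ s, 0 ≤ c i) (v : ι → n → ℂ) :
    (∑ i ∈ s, ((c i : ℝ) : ℂ) • outerMat (v i)).PosSemidef := by
  refine Matrix.posSemidef_iff_dotProduct_mulVec.mpr ⟨?_, ?_⟩
  · rw [Matrix.IsHermitian, Matrix.conjTranspose_sum]
    refine Finset.sum_congr rfl fun i _ => ?_
    rw [Matrix.conjTranspose_smul, (outer_hermitian (v i)).eq]
    congr 1
    exact Complex.conj_ofReal _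
  · intro x
    rw [sum_mulVec', dotProduct_sum']
    refine Finset.sum_nonneg fun i hi => ?_
    rw [Matrix.smul_mulVec, dotProduct_smul, smul_eq_mul, quadform_outer,
      conj_mul_self, ← Complex.ofReal_mul]
    rw [Complex.zero_le_real]
    exact mul_nonneg (hc i hi) (Complex.normSq_nonneg _)

theorem stmt2 {O E : Type*} [Fintype O] [Fintype E] [DecidableEq O] [DecidableEq E]
    (k : ℕ) (hk : 1 ≤ k)
    (Q : Matrix (Fin k → O) (Fin k → O) ℂ →ₗ[ℂ] Matrix (O × E) (O × E) ℂ)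
    (hQpos : ∀ M, M.PosSemidef → (Q M).PosSemidef)
    (ψ₀ ψ₁ : O → ℂ)
    (hψ₀ : ∑ i, ‖ψ₀ i‖ ^ 2 = 1) (hψ₁ : ∑ i, ‖ψ₁ i‖ ^ 2 = 1)
    (hne : outerMat ψ₀ ≠ outerMat ψ₁)
    (φ₀ : E → ℂ) (hφ₀ : ∑ e, ‖φ₀ e‖ ^ 2 = 1)
    (φ₀₁ : O × E → ℂ) (hφ₀₁ : ∑ x, ‖φ₀₁ x‖ ^ 2 = 1)
    (q : ℝ) (hq : q ∈ Set.Ioo (0:ℝ) 1)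
    (p₀ p₀₁ : ℝ) (hp₀ : 0 < p₀) (hp₀₁ : 0 < p₀₁)
    (h1 : Q (tensorPow k (outerMat ψ₀)) =
      (p₀ : ℂ) • (outerMat ψ₀ ⊗ₖ outerMat φ₀))
    (h2 : Q (tensorPow k ((q : ℂ) • outerMat ψ₀ + ((1 - q : ℝ) : ℂ) • outerMat ψ₁)) =
      (p₀₁ : ℂ) • outerMat φ₀₁)
    (h3 : ptrace2 (outerMat φ₀₁) =
      (q : ℂ) • outerMat ψ₀ + ((1 - q : ℝ) : ℂ) • outerMat ψ₁) :
    False := by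
  classical
  obtain ⟨hq0, hq1⟩ := hq
  have hr0 : (0:ℝ) < 1 - q := by linarith
  set c : Finset (Fin k) → ℝ := fun t => q ^ t.card * (1 - q) ^ (k - t.card) with hc
  set V : Finset (Fin k) → (Fin k → O) → ℂ :=
    fun t f => (∏ i ∈ t, ψ₀ (f i)) * ∏ i ∈ Finset.univ \ t, ψ₁ (f i) with hV
  have hcard : ∀ t : Finset (Fin k), (Finset.univ \ t).card = k - t.card := by
    intro t
    rw [Finset.card_sdiff_of_subset (Finset.subset_univ t), Finset.card_univ, Fintype.card_fin]
  have hdecomp : tensorPow k ((q : ℂ) • outerMat ψ₀ + ((1 - q : ℝ) : ℂ) • outerMat ψ₁) =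
      ∑ t ∈ (Finset.univ : Finset (Fin k)).powerset, ((c t : ℝ) : ℂ) • outerMat (V t) := by
    ext f g
    simp only [tensorPow, Matrix.of_apply, Matrix.sum_apply, Matrix.smul_apply,
      Matrix.add_apply, outerMat, Matrix.vecMulVec_apply, Pi.star_apply, smul_eq_mul]
    rw [Finset.prod_add]
    refine Finset.sum_congr rfl fun t ht => ?_
    simp only [hc, hV, star_mul', star_prod, Pi.star_apply]
    push_cast
    rw [Finset.prod_mul_distrib, Finset.prod_mul_distrib, Finset.prod_mul_distrib,
      Finset.prod_mul_distrib, Finset.prod_const, Finset.prod_const, hcard t]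
    ring
  have hpow0 : tensorPow k (outerMat ψ₀) = outerMat fun f : Fin k → O => ∏ i, ψ₀ (f i) := by
    ext f g
    simp only [tensorPow, Matrix.of_apply, outerMat, Matrix.vecMulVec_apply, Pi.star_apply,
      star_prod]
    rw [Finset.prod_mul_distrib]
  have huniv : (Finset.univ : Finset (Fin k)) ∈ (Finset.univ : Finset (Fin k)).powerset :=
    Finset.mem_powerset_self _
  have hVuniv : V Finset.univ = fun f : Fin k → O => ∏ i, ψ₀ (f i) := by
    funext f
    simp [hV]
  have hcuniv : c Finset.univ = q ^ k := by
    simp [hc, Finset.card_univ]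
  have hsub : tensorPow k ((q : ℂ) • outerMat ψ₀ + ((1 - q : ℝ) : ℂ) • outerMat ψ₁)
      - ((q ^ k : ℝ) : ℂ) • tensorPow k (outerMat ψ₀)
      = ∑ t ∈ ((Finset.univ : Finset (Fin k)).powerset.erase Finset.univ),
          ((c t : ℝ) : ℂ) • outerMat (V t) := by
    rw [hdecomp, hpow0, ← Finset.add_sum_erase _ _ huniv, hVuniv, hcuniv]
    abel
  have hD0 : (tensorPow k ((q : ℂ) • outerMat ψ₀ + ((1 - q : ℝ) : ℂ) • outerMat ψ₁)
      - ((q ^ k : ℝ) : ℂ) • tensorPow k (outerMat ψ₀)).PosSemidef := by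
    rw [hsub]
    exact posSemidef_sum_outer _ _ (fun t _ =>
      mul_nonneg (pow_nonneg hq0.le _) (pow_nonneg hr0.le _)) _
  have hQD : ((p₀₁ : ℂ) • outerMat φ₀₁
      - ((q ^ k * p₀ : ℝ) : ℂ) • (outerMat ψ₀ ⊗ₖ outerMat φ₀)).PosSemidef := by
    have := hQpos _ hD0
    rw [map_sub, map_smul, h1, h2] at this
    convert this using 2
    rw [smul_smul]
    push_cast
    ring
  set w : O × E → ℂ := fun p => ψ₀ p.1 * φ₀ p.2 with hw
  have hkron : outerMat ψ₀ ⊗ₖ outerMat φ₀ = outerMat w := by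
    ext ⟨i, e⟩ ⟨j, f⟩
    simp only [outerMat, Matrix.kroneckerMap_apply, Matrix.vecMulVec_apply, Pi.star_apply,
      hw, star_mul']
    ring
  rw [hkron] at hQD
  set ipφ : (O × E → ℂ) → ℂ := fun x => dotProduct (star φ₀₁) x with hipφ
  set ipw : (O × E → ℂ) → ℂ := fun x => dotProduct (star w) x with hipw
  have hquad : ∀ x : O × E → ℂ,
      0 ≤ ((p₀₁ * Complex.normSq (ipφ x) - q ^ k * p₀ * Complex.normSq (ipw x) : ℝ) : ℂ) := by
    intro x
    have h := hQD.dotProduct_mulVec_nonneg x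
    rw [Matrix.sub_mulVec, dotProduct_sub, Matrix.smul_mulVec,
      Matrix.smul_mulVec, dotProduct_smul, dotProduct_smul,
      smul_eq_mul, smul_eq_mul, quadform_outer, quadform_outer,
      conj_mul_self, conj_mul_self] at h
    convert h using 1
    push_cast
    ring
  -- norms
  have hφnorm : dotProduct (star φ₀₁) φ₀₁ = 1 := by
    rw [dotProduct]
    simp_rw [Pi.star_apply, star_mul_self']
    rw [← Complex.ofReal_sum, hφ₀₁, Complex.ofReal_one]
  have hwnorm : dotProduct (star w) w = 1 := by
    rw [dotProduct]
    simp_rw [Pi.star_apply, star_mul_self']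
    rw [← Complex.ofReal_sum]
    have : ∑ x : O × E, ‖w x‖ ^ 2 = 1 := by
      have hterm : ∀ x : O × E, ‖w x‖ ^ 2 = ‖ψ₀ x.1‖ ^ 2 * ‖φ₀ x.2‖ ^ 2 := by
        intro x
        rw [hw]
        simp only [norm_mul, mul_pow]
      simp_rw [hterm]
      rw [Fintype.sum_prod_type]
      simp_rw [← Finset.mul_sum, hφ₀, mul_one]
      exact hψ₀
    rw [this, Complex.ofReal_one]
  -- the equality-case vector
  set c₀ : ℂ := ipφ w with hc₀
  set x₀ : O × E → ℂ := w - c₀ • φ₀₁ with hx₀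
  have hφx : ipφ x₀ = 0 := by
    rw [hipφ]
    simp only [hx₀, dotProduct_sub, dotProduct_smul, smul_eq_mul]
    rw [hφnorm]
    simp [hc₀, hipφ]
  have hwx : ipw x₀ = 0 := by
    have h := hquad x₀
    rw [hφx] at h
    simp only [map_zero, Complex.normSq_zero, mul_zero, zero_sub] at h
    rw [Complex.zero_le_real] at h
    have hnn : 0 ≤ Complex.normSq (ipw x₀) := Complex.normSq_nonneg _
    have hpos : 0 < q ^ k * p₀ := mul_pos (pow_pos hq0 _) hp₀
    have : Complex.normSq (ipw x₀) = 0 := by nlinarith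
    exact Complex.normSq_eq_zero.mp this
  have hx0zero : x₀ = 0 := by
    have hdot : dotProduct (star x₀) x₀ = 0 := by
      have hstar : star x₀ = star w - star c₀ • star φ₀₁ := by
        rw [hx₀, star_sub, star_smul]
      rw [hstar, sub_dotProduct, smul_dotProduct, smul_eq_mul]
      rw [show dotProduct (star w) x₀ = ipw x₀ from rfl,
        show dotProduct (star φ₀₁) x₀ = ipφ x₀ from rfl, hwx, hφx]
      ring
    have hsum : ∑ j : O × E, ‖x₀ j‖ ^ 2 = 0 := by
      have : dotProduct (star x₀) x₀ = ((∑ j : O × E, ‖x₀ j‖ ^ 2 : ℝ) : ℂ) := by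
        rw [dotProduct]
        simp_rw [Pi.star_apply, star_mul_self']
        rw [← Complex.ofReal_sum]
      rw [this] at hdot
      exact_mod_cast hdot
    funext j
    have h1 := (Finset.sum_eq_zero_iff_of_nonneg
      (fun j _ => sq_nonneg ‖x₀ j‖)).mp hsum j (Finset.mem_univ j)
    have : ‖x₀ j‖ = 0 := by
      have := sq_eq_zero_iff.mp h1
      simpa using this
    simpa using norm_eq_zero.mp this
  have hwc : w = c₀ • φ₀₁ := by
    have h0 : w - c₀ • φ₀₁ = 0 := by rw [← hx₀, hx0zero]
    exact sub_eq_zero.mp h0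
  -- |c₀|² = 1
  have hcc : star c₀ * c₀ = 1 := by
    have hdp : dotProduct (star w) w = star c₀ * c₀ := by
      rw [hwc, star_smul, smul_dotProduct, dotProduct_smul, hφnorm]
      simp [mul_comm]
    rw [hdp] at hwnorm
    exact hwnorm
  -- the two outer products agree
  have houter : outerMat w = outerMat φ₀₁ := by
    ext x y
    simp only [outerMat, Matrix.vecMulVec_apply, Pi.star_apply, hwc, Pi.smul_apply,
      smul_eq_mul, star_mul']
    calc c₀ * φ₀₁ x * (star c₀ * star (φ₀₁ y))
        = (star c₀ * c₀) * (φ₀₁ x * star (φ₀₁ y)) := by ring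
      _ = φ₀₁ x * star (φ₀₁ y) := by rw [hcc, one_mul]
  -- partial trace computation
  have hφ0norm : ∑ e, star (φ₀ e) * φ₀ e = (1:ℂ) := by
    simp_rw [star_mul_self']
    rw [← Complex.ofReal_sum, hφ₀, Complex.ofReal_one]
  have hpt : ptrace2 (outerMat φ₀₁) = outerMat ψ₀ := by
    rw [← houter]
    ext i j
    simp only [ptrace2, Matrix.of_apply, outerMat, Matrix.vecMulVec_apply, Pi.star_apply,
      hw, star_mul']
    calc ∑ e, ψ₀ i * φ₀ e * (star (ψ₀ j) * star (φ₀ e))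
        = (ψ₀ i * star (ψ₀ j)) * ∑ e, star (φ₀ e) * φ₀ e := by
          rw [Finset.mul_sum]
          exact Finset.sum_congr rfl fun e _ => by ring
      _ = ψ₀ i * star (ψ₀ j) := by rw [hφ0norm, mul_one]
  rw [hpt] at h3
  -- conclude ψ₀, ψ₁ give the same outer product
  have heq2 : ((1 - q : ℝ) : ℂ) • outerMat ψ₀ = ((1 - q : ℝ) : ℂ) • outerMat ψ₁ := by
    have h4 := congrArg (fun M => M - (q : ℂ) • outerMat ψ₀) h3
    simp only [add_sub_cancel_left] at h4
    rw [← h4]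
    rw [show ((1 - q : ℝ) : ℂ) = 1 - (q : ℂ) by push_cast; ring, sub_smul, one_smul]
  have hne0 : ((1 - q : ℝ) : ℂ) ≠ 0 := Complex.ofReal_ne_zero.mpr (by linarith)
  have : ((1 - q : ℝ) : ℂ) • (outerMat ψ₀ - outerMat ψ₁) = 0 := by
    rw [smul_sub, heq2, sub_self]
  rcases smul_eq_zero.mp this with h | h
  · exact hne0 h
  · exact hne (sub_eq_zero.mp h)
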